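/- Let p be a prime, q = p^e a power of p, ℓ an odd prime different from p, and n a positive integer divisible by neither p nor ℓ. Let γ be an integer, τ the least positive integer with γ·q^τ ≡ γ (mod n), and assume ℓ divides q^τ − 1; set v = v_ℓ(q^τ − 1). Then for every nonzero integer δ with δ ≡ γ (mod n) and every N ≥ 0, the size of the q-cyclotomic coset modulo ℓ^N n containing δ equals τ·ℓ^{max(0, N − v_ℓ(δ) − v)}. -/

import Mathlib

theorem stmt_12 (p e q ℓ n : ℕ) (hp : p.Prime) (he : 0 < e) (hq : q = p ^ e)
    (hℓ : ℓ.Prime) (hℓ2 : ℓ ≠ 2) (hℓp : ℓ ≠ p)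
    (hn : 0 < n) (hnp : ¬ p ∣ n) (hnℓ : ¬ ℓ ∣ n)
    (γ : ℤ) (τ : ℕ)
    (hτ : IsLeast {t : ℕ | 0 < t ∧ γ * (q : ℤ) ^ t ≡ γ [ZMOD (n : ℤ)]} τ)
    (hdvd : (ℓ : ℤ) ∣ (q : ℤ) ^ τ - 1) :
    ∀ δ : ℤ, δ ≠ 0 → δ ≡ γ [ZMOD (n : ℤ)] → ∀ N : ℕ,
      IsLeast {j : ℕ | 0 < j ∧ δ * (q : ℤ) ^ j ≡ δ [ZMOD ((ℓ ^ N * n : ℕ) : ℤ)]}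
        (τ * ℓ ^ (N - (padicValInt ℓ δ + padicValInt ℓ ((q : ℤ) ^ τ - 1)))) := by
  haveI : Fact ℓ.Prime := ⟨hℓ⟩
  obtain ⟨⟨hτpos, hτcong⟩, hτmin⟩ := hτ
  have hq2 : 2 ≤ q := by
    calc 2 ≤ p := hp.two_le
    _ ≤ p ^ e := Nat.le_self_pow he.ne' p
    _ = q := hq.symm
  have hq1 : ∀ j : ℕ, 1 ≤ q ^ j := fun j => Nat.one_le_pow _ _ (by omega)
  have hqj2 : ∀ j : ℕ, 0 < j → 2 ≤ q ^ j := by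
    intro j hj
    calc 2 ≤ q := hq2
    _ = q ^ 1 := (pow_one q).symm
    _ ≤ q ^ j := Nat.pow_le_pow_right (by omega) hj
  have hcast : ∀ j : ℕ, (q : ℤ) ^ j - 1 = ((q ^ j - 1 : ℕ) : ℤ) := by
    intro j
    push_cast [Nat.cast_sub (hq1 j)]
    ring
  -- characterize congruence mod n
  have hA : ∀ k : ℕ, γ * (q : ℤ) ^ (τ * k) ≡ γ [ZMOD (n : ℤ)] := by
    intro k
    induction k with
    | zero => simp
    | succ k ih =>
      have h2 : γ * (q : ℤ) ^ (τ * (k + 1)) = γ * (q : ℤ) ^ (τ * k) * (q : ℤ) ^ τ := by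
        rw [mul_assoc, ← pow_add]; ring_nf
      rw [h2]
      calc γ * (q : ℤ) ^ (τ * k) * (q : ℤ) ^ τ
          ≡ γ * (q : ℤ) ^ τ [ZMOD (n : ℤ)] := ih.mul_right _
        _ ≡ γ [ZMOD (n : ℤ)] := hτcong
  have hchar : ∀ j : ℕ, (γ * (q : ℤ) ^ j ≡ γ [ZMOD (n : ℤ)]) ↔ τ ∣ j := by
    intro j
    constructor
    · intro hj
      have hr : γ * (q : ℤ) ^ (j % τ) ≡ γ [ZMOD (n : ℤ)] := by
        have hjd : j = τ * (j / τ) + j % τ := (Nat.div_add_mod j τ).symm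
        have h1 : γ * (q : ℤ) ^ (τ * (j / τ)) * (q : ℤ) ^ (j % τ)
            ≡ γ * (q : ℤ) ^ (j % τ) [ZMOD (n : ℤ)] := (hA (j / τ)).mul_right _
        have h2 : γ * (q : ℤ) ^ (τ * (j / τ)) * (q : ℤ) ^ (j % τ) = γ * (q : ℤ) ^ j := by
          rw [mul_assoc, ← pow_add, ← hjd]
        rw [h2] at h1
        exact h1.symm.trans hj
      by_contra hnd
      have hrpos : 0 < j % τ := by
        rcases Nat.eq_zero_or_pos (j % τ) with h | h
        · exact absurd (Nat.dvd_of_mod_eq_zero h) hnd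
        · exact h
      have := hτmin ⟨hrpos, hr⟩
      have := Nat.mod_lt j hτpos
      omega
    · rintro ⟨k, rfl⟩
      exact hA k
  have hℓq : ¬ ℓ ∣ q ^ τ := by
    intro h
    have h1 := hℓ.dvd_of_dvd_pow h
    rw [hq] at h1
    exact hℓp ((Nat.prime_dvd_prime_iff_eq hℓ hp).mp (hℓ.dvd_of_dvd_pow h1))
  have hℓqτ : ℓ ∣ q ^ τ - 1 := by
    have h := hcast τ
    rw [h] at hdvd
    exact_mod_cast hdvd
  have hval : padicValInt ℓ ((q : ℤ) ^ τ - 1) = padicValNat ℓ (q ^ τ - 1) := by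
    rw [hcast τ, padicValInt.of_nat]
  have hLTE : ∀ m : ℕ, 0 < m →
      padicValNat ℓ (q ^ (τ * m) - 1) = padicValNat ℓ (q ^ τ - 1) + padicValNat ℓ m := by
    intro m hm
    have h := Nat.emultiplicity_pow_sub_pow hℓ (hℓ.odd_of_ne_two hℓ2) hℓqτ hℓq m
    rw [one_pow, ← pow_mul] at h
    have h1 : 0 < q ^ (τ * m) - 1 := by
      have := hqj2 (τ * m) (by positivity); omega
    have h2 : 0 < q ^ τ - 1 := by have := hqj2 τ hτpos; omega
    rw [← padicValNat_eq_emultiplicity h1.ne', ← padicValNat_eq_emultiplicity h2.ne',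
      ← padicValNat_eq_emultiplicity hm.ne', ← Nat.cast_add, Nat.cast_inj] at h
    exact h
  intro δ hδ0 hδγ N
  set a := padicValInt ℓ δ with ha
  set v := padicValInt ℓ ((q : ℤ) ^ τ - 1) with hv
  set K := N - (a + v) with hK
  have hmain : ∀ j : ℕ, (δ * (q : ℤ) ^ j ≡ δ [ZMOD ((ℓ ^ N * n : ℕ) : ℤ)]) ↔ τ * ℓ ^ K ∣ j := by
    intro j
    have hdvd_iff : (δ * (q : ℤ) ^ j ≡ δ [ZMOD ((ℓ ^ N * n : ℕ) : ℤ)]) ↔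
        ((ℓ ^ N * n : ℕ) : ℤ) ∣ δ * ((q : ℤ) ^ j - 1) := by
      rw [Int.modEq_iff_dvd, dvd_sub_comm,
        show δ * (q : ℤ) ^ j - δ = δ * ((q : ℤ) ^ j - 1) from by ring]
    rcases Nat.eq_zero_or_pos j with rfl | hj
    · simp [hdvd_iff]
    have hqjne : (q : ℤ) ^ j - 1 ≠ 0 := by
      rw [hcast j]
      have hb : q ^ j - 1 ≠ 0 := by have := hqj2 j hj; omega
      exact_mod_cast hb
    have hne : δ * ((q : ℤ) ^ j - 1) ≠ 0 := mul_ne_zero hδ0 hqjne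
    have hcop : IsCoprime ((ℓ : ℤ) ^ N) ((n : ℤ)) := by
      have h1 : Nat.Coprime (ℓ ^ N) n :=
        Nat.Coprime.pow_left N ((Nat.Prime.coprime_iff_not_dvd hℓ).mpr hnℓ)
      have h2 := Nat.isCoprime_iff_coprime.mpr h1
      push_cast at h2
      exact h2
    have hsplit : ((ℓ ^ N * n : ℕ) : ℤ) ∣ δ * ((q : ℤ) ^ j - 1) ↔
        ((ℓ : ℤ) ^ N ∣ δ * ((q : ℤ) ^ j - 1) ∧ (n : ℤ) ∣ δ * ((q : ℤ) ^ j - 1)) := by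
      push_cast
      constructor
      · intro h
        exact ⟨(dvd_mul_right _ _).trans h, (dvd_mul_left _ _).trans h⟩
      · intro h
        exact hcop.mul_dvd h.1 h.2
    have hn_iff : (n : ℤ) ∣ δ * ((q : ℤ) ^ j - 1) ↔ τ ∣ j := by
      rw [← hchar j, Int.modEq_iff_dvd, dvd_sub_comm,
        show γ * (q : ℤ) ^ j - γ = γ * ((q : ℤ) ^ j - 1) from by ring]
      have hcong : δ * ((q : ℤ) ^ j - 1) ≡ γ * ((q : ℤ) ^ j - 1) [ZMOD (n : ℤ)] :=
        hδγ.mul_right _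
      rw [← Int.modEq_zero_iff_dvd, ← Int.modEq_zero_iff_dvd]
      exact ⟨fun h => hcong.symm.trans h, fun h => hcong.trans h⟩
    have hℓ_iff : (ℓ : ℤ) ^ N ∣ δ * ((q : ℤ) ^ j - 1) ↔
        N ≤ a + padicValInt ℓ ((q : ℤ) ^ j - 1) := by
      rw [padicValInt_dvd_iff, padicValInt.mul hδ0 hqjne]
      simp [hne, ha]
    rw [hdvd_iff, hsplit, hn_iff, hℓ_iff]
    constructor
    · rintro ⟨h2, ⟨m, rfl⟩⟩
      have hm : 0 < m := by
        rcases Nat.eq_zero_or_pos m with rfl | h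
        · simp at hj
        · exact h
      have hvj : padicValInt ℓ ((q : ℤ) ^ (τ * m) - 1) = v + padicValNat ℓ m := by
        rw [hcast (τ * m), padicValInt.of_nat, hLTE m hm, hval]
      rw [hvj] at h2
      have hKm : ℓ ^ K ∣ m := by
        rw [padicValNat_dvd_iff_le hm.ne']
        omega
      exact mul_dvd_mul_left τ hKm
    · intro hd
      obtain ⟨m, rfl⟩ := (dvd_mul_right τ (ℓ ^ K)).trans hd
      have hm : 0 < m := by
        rcases Nat.eq_zero_or_pos m with rfl | h
        · simp at hj
        · exact h
      have hKm : ℓ ^ K ∣ m := by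
        obtain ⟨c, hc⟩ := hd
        rw [mul_assoc] at hc
        exact ⟨c, Nat.eq_of_mul_eq_mul_left hτpos hc⟩
      have hw : K ≤ padicValNat ℓ m := (padicValNat_dvd_iff_le hm.ne').mp hKm
      have hvj : padicValInt ℓ ((q : ℤ) ^ (τ * m) - 1) = v + padicValNat ℓ m := by
        rw [hcast (τ * m), padicValInt.of_nat, hLTE m hm, hval]
      refine ⟨?_, dvd_mul_right τ m⟩
      rw [hvj]
      omega
  constructor
  · exact ⟨Nat.mul_pos hτpos (pow_pos hℓ.pos K), (hmain _).mpr dvd_rfl⟩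
  · rintro j ⟨hj, hcong⟩
    exact Nat.le_of_dvd hj ((hmain j).mp hcong)
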